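/- Suppose there exist rational trigonometric polynomials q₁,…,q_r such that for all γ ∈ Γ* and all ω where both sides are defined, S(M^Tω)τ(ω) conj(τ(ω+γ)) + Σ_ℓ q_ℓ(ω) conj(q_ℓ(ω+γ)) equals S(ω) if γ = 0 and 0 otherwise. Then the oblique sub-QMF condition holds: Σ_{γ∈Γ*} |τ(ω+γ)|²/S(ω+γ) ≤ 1/S(M^Tω) for all ω at which both sides are defined. -/

import Mathlib

noncomputable section

/-- A (complex-valued) trigonometric polynomial in `n` variables: a finite linear
combination of the exponentials `ω ↦ e^{i k·ω}`, `k ∈ ℤⁿ`. -/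
def IsTrigPoly {n : ℕ} (f : (Fin n → ℝ) → ℂ) : Prop :=
  ∃ (s : Finset (Fin n → ℤ)) (c : (Fin n → ℤ) → ℂ),
    ∀ ω, f ω = ∑ k ∈ s, c k * Complex.exp (Complex.I * ∑ j, (k j : ℂ) * (ω j : ℂ))

/-- A real-valued trigonometric polynomial in `n` variables: a finite linear
combination of `cos(k·ω)` and `sin(k·ω)`, `k ∈ ℤⁿ`. -/
def IsTrigPolyR {n : ℕ} (f : (Fin n → ℝ) → ℝ) : Prop :=
  ∃ (s : Finset (Fin n → ℤ)) (a b : (Fin n → ℤ) → ℝ),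
    ∀ ω, f ω = ∑ k ∈ s,
      (a k * Real.cos (∑ j, (k j : ℝ) * ω j) + b k * Real.sin (∑ j, (k j : ℝ) * ω j))

/-- `M ∈ Mₙ(ℤ)` is a dilation matrix: all of its (complex) eigenvalues have
modulus strictly greater than 1. -/
def IsDilation {n : ℕ} (M : Matrix (Fin n) (Fin n) ℤ) : Prop :=
  ∀ μ : ℂ, ((M.map (Int.cast : ℤ → ℂ)).charpoly).IsRoot μ → 1 < ‖μ‖

/-- The action `ω ↦ Mᵀ ω` of the transposed dilation matrix on `ℝⁿ`. -/
def MT {n : ℕ} (M : Matrix (Fin n) (Fin n) ℤ) (ω : Fin n → ℝ) : Fin n → ℝ :=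
  (M.map (Int.cast : ℤ → ℝ)).transpose.mulVec ω

/-- `Γ* ⊂ ℝⁿ` is a complete set of distinct coset representatives of
`(2π M⁻ᵀ ℤⁿ)/(2π ℤⁿ)` containing `0`. -/
def FreqReps {n : ℕ} (M : Matrix (Fin n) (Fin n) ℤ) (Γstar : Finset (Fin n → ℝ)) : Prop :=
  (0 : Fin n → ℝ) ∈ Γstar ∧
  (∀ γ ∈ Γstar, ∃ m : Fin n → ℤ, ∀ i,
    γ i = 2 * Real.pi
      * ((M.map (Int.cast : ℤ → ℝ))⁻¹.transpose.mulVec (fun j => (m j : ℝ)) i)) ∧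
  (∀ m : Fin n → ℤ, ∃! γ, γ ∈ Γstar ∧ ∃ l : Fin n → ℤ, ∀ i,
    2 * Real.pi * ((M.map (Int.cast : ℤ → ℝ))⁻¹.transpose.mulVec (fun j => (m j : ℝ)) i)
      = γ i + 2 * Real.pi * (l i : ℝ))

/-- `Γ ⊂ ℤⁿ` is a complete set of distinct coset representatives of `ℤⁿ/Mℤⁿ`. -/
def SpatialReps {n : ℕ} (M : Matrix (Fin n) (Fin n) ℤ) (Γ : Finset (Fin n → ℤ)) : Prop :=
  ∀ m : Fin n → ℤ, ∃! ν, ν ∈ Γ ∧ ∃ l : Fin n → ℤ, m = ν + M.mulVec l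

open Complex Set

lemma trig_analytic {n : ℕ} {f : (Fin n → ℝ) → ℂ} (hf : IsTrigPoly f) :
    AnalyticOnNhd ℝ f univ := by
  obtain ⟨s, c, hc⟩ := hf
  have hfn : f = fun ω => ∑ k ∈ s, c k * Complex.exp (Complex.I * ∑ j, (k j : ℂ) * (ω j : ℂ)) :=
    funext hc
  rw [hfn]
  apply Finset.analyticOnNhd_fun_sum
  intro k _
  apply analyticOnNhd_const.mul
  have hlin : AnalyticOnNhd ℝ
      (fun ω : Fin n → ℝ => Complex.I * ∑ j, (k j : ℂ) * (ω j : ℂ)) univ := by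
    have : (fun ω : Fin n → ℝ => Complex.I * ∑ j, (k j : ℂ) * (ω j : ℂ))
        = fun ω => (∑ j, (Complex.I * (k j : ℂ)) •
            ((Complex.ofRealCLM.comp (ContinuousLinearMap.proj j)) : (Fin n → ℝ) →L[ℝ] ℂ)) ω := by
      ext ω
      simp [Finset.mul_sum, ContinuousLinearMap.sum_apply, smul_eq_mul, mul_assoc]
    rw [this]
    exact ContinuousLinearMap.analyticOnNhd _ _
  exact ((analyticOnNhd_cexp.restrictScalars).comp hlin (mapsTo_univ _ _))

lemma trig_continuous {n : ℕ} {f : (Fin n → ℝ) → ℂ} (hf : IsTrigPoly f) :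
    Continuous f := by
  rw [← continuousOn_univ]
  exact (trig_analytic hf).continuousOn

lemma trigR_continuous {n : ℕ} {f : (Fin n → ℝ) → ℝ} (hf : IsTrigPolyR f) :
    Continuous f := by
  obtain ⟨s, a, b, h⟩ := hf
  rw [funext h]
  fun_prop

lemma twoPiMem {n : ℕ} (l : Fin n → ℤ) (k : Fin n → ℤ) (v : Fin n → ℝ) :
    ∑ j, (k j : ℝ) * (v j + 2 * Real.pi * (l j : ℝ))
      = (∑ j, (k j : ℝ) * v j) + (∑ j, k j * l j : ℤ) * (2 * Real.pi) := by
  push_cast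
  calc ∑ j, (k j : ℝ) * (v j + 2 * Real.pi * (l j : ℝ))
      = ∑ j, ((k j : ℝ) * v j + ((k j : ℝ) * (l j : ℝ)) * (2 * Real.pi)) := by
        apply Finset.sum_congr rfl; intro j _; ring
    _ = (∑ j, (k j : ℝ) * v j) + (∑ j, (k j : ℝ) * (l j : ℝ)) * (2 * Real.pi) := by
        rw [Finset.sum_add_distrib, Finset.sum_mul]

lemma trig_periodic {n : ℕ} {f : (Fin n → ℝ) → ℂ} (hf : IsTrigPoly f)
    (v : Fin n → ℝ) (l : Fin n → ℤ) :
    f (v + fun i => 2 * Real.pi * (l i : ℝ)) = f v := by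
  obtain ⟨s, c, hc⟩ := hf
  rw [hc, hc]
  apply Finset.sum_congr rfl
  intro k _
  congr 1
  have h1 : (Complex.I * ∑ j, (k j : ℂ) * (((v + fun i => 2 * Real.pi * (l i : ℝ)) j : ℝ) : ℂ))
      = Complex.I * (∑ j, (k j : ℂ) * (v j : ℂ)) + (∑ j, k j * l j : ℤ) * (2 * Real.pi * Complex.I) := by
    have h2 : ∑ j, (k j : ℂ) * (((v + fun i => 2 * Real.pi * (l i : ℝ)) j : ℝ) : ℂ)
        = (∑ j, (k j : ℂ) * (v j : ℂ)) + ((∑ j, k j * l j : ℤ) : ℂ) * (2 * Real.pi) := by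
      have := twoPiMem l k v
      have h3 : ∀ j, (((v + fun i => 2 * Real.pi * (l i : ℝ)) j : ℝ) : ℂ)
          = ((v j : ℝ) : ℂ) + 2 * Real.pi * (l j : ℝ) := by
        intro j; push_cast [Pi.add_apply]; ring
      calc ∑ j, (k j : ℂ) * (((v + fun i => 2 * Real.pi * (l i : ℝ)) j : ℝ) : ℂ)
          = ∑ j, ((k j : ℂ) * (v j : ℂ) + ((k j : ℂ) * (l j : ℂ)) * (2 * Real.pi)) := by
            apply Finset.sum_congr rfl; intro j _; rw [h3 j]; push_cast; ring
        _ = (∑ j, (k j : ℂ) * (v j : ℂ)) + (∑ j, (k j : ℂ) * (l j : ℂ)) * (2 * Real.pi) := by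
            rw [Finset.sum_add_distrib, Finset.sum_mul]
        _ = (∑ j, (k j : ℂ) * (v j : ℂ)) + ((∑ j, k j * l j : ℤ) : ℂ) * (2 * Real.pi) := by
            push_cast; ring
    rw [h2]; ring
  rw [h1, Complex.exp_add, Complex.exp_int_mul_two_pi_mul_I, mul_one]

lemma trigR_periodic {n : ℕ} {f : (Fin n → ℝ) → ℝ} (hf : IsTrigPolyR f)
    (v : Fin n → ℝ) (l : Fin n → ℤ) :
    f (v + fun i => 2 * Real.pi * (l i : ℝ)) = f v := by
  obtain ⟨s, a, b, h⟩ := hf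
  rw [h, h]
  apply Finset.sum_congr rfl
  intro k _
  have h2 : ∑ j, (k j : ℝ) * ((v + fun i => 2 * Real.pi * (l i : ℝ)) j)
      = (∑ j, (k j : ℝ) * v j) + (∑ j, k j * l j : ℤ) * (2 * Real.pi) := twoPiMem l k v
  rw [h2, Real.cos_add_int_mul_two_pi, Real.sin_add_int_mul_two_pi]

-- nonzero trig polys have dense open nonvanishing (translated) set
lemma trig_dense_ne {n : ℕ} {f : (Fin n → ℝ) → ℂ} (hf : IsTrigPoly f)
    (hne : ∃ ω, f ω ≠ 0) (c : Fin n → ℝ) :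
    Dense {ω : Fin n → ℝ | f (ω + c) ≠ 0} := by
  have hg : AnalyticOnNhd ℝ (fun ω : Fin n → ℝ => f (ω + c)) Set.univ := by
    apply (trig_analytic hf).comp _ (Set.mapsTo_univ _ _)
    have : (fun ω : Fin n → ℝ => ω + c)
        = fun ω => (ContinuousLinearMap.id ℝ (Fin n → ℝ)) ω + c := by ext ω i; simp
    rw [this]
    exact ((ContinuousLinearMap.id ℝ (Fin n → ℝ)).analyticOnNhd _).add analyticOnNhd_const
  rw [dense_iff_inter_open]
  rintro U hU ⟨x, hx⟩
  by_contra hemp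
  rw [Set.not_nonempty_iff_eq_empty] at hemp
  have hev : (fun ω : Fin n → ℝ => f (ω + c)) =ᶠ[nhds x] 0 := by
    filter_upwards [hU.mem_nhds hx] with y hy
    by_contra hyne
    have : y ∈ U ∩ {ω : Fin n → ℝ | f (ω + c) ≠ 0} := ⟨hy, hyne⟩
    rw [hemp] at this
    exact this
  have := hg.eqOn_zero_of_preconnected_of_eventuallyEq_zero
    isPreconnected_univ (Set.mem_univ x) hev
  obtain ⟨ω₀, hω₀⟩ := hne
  have h2 := this (Set.mem_univ (ω₀ - c))
  simp only [Pi.zero_apply, sub_add_cancel] at h2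
  exact hω₀ h2

lemma trig_open_ne {n : ℕ} {f : (Fin n → ℝ) → ℂ} (hf : IsTrigPoly f) (c : Fin n → ℝ) :
    IsOpen {ω : Fin n → ℝ | f (ω + c) ≠ 0} := by
  have : Continuous (fun ω : Fin n → ℝ => f (ω + c)) :=
    (trig_continuous hf).comp (by fun_prop)
  exact isOpen_ne.preimage this

-- the real matrix is invertible
lemma dil_det_ne {n : ℕ} {M : Matrix (Fin n) (Fin n) ℤ} (hdil : IsDilation M) :
    IsUnit (M.map (Int.cast : ℤ → ℝ)).det := by
  rw [isUnit_iff_ne_zero]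
  intro h0
  have h1 : (M.map (Int.cast : ℤ → ℝ)).det = ((M.det : ℝ)) := by
    rw [show (M.map (Int.cast : ℤ → ℝ)) = (Int.castRingHom ℝ).mapMatrix M from rfl,
      ← RingHom.map_det]; rfl
  have h2 : (M.map (Int.cast : ℤ → ℂ)).det = ((M.det : ℂ)) := by
    rw [show (M.map (Int.cast : ℤ → ℂ)) = (Int.castRingHom ℂ).mapMatrix M from rfl,
      ← RingHom.map_det]; rfl
  have hz : M.det = 0 := by rw [h1] at h0; exact_mod_cast h0
  have hC : (M.map (Int.cast : ℤ → ℂ)).det = 0 := by rw [h2, hz]; norm_num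
  have hroot : ((M.map (Int.cast : ℤ → ℂ)).charpoly).IsRoot 0 := by
    have hd := Matrix.det_eq_sign_charpoly_coeff (M.map (Int.cast : ℤ → ℂ))
    rw [hC] at hd
    have : ((M.map (Int.cast : ℤ → ℂ)).charpoly).coeff 0 = 0 := by
      rcases mul_eq_zero.mp hd.symm with h | h
      · exact absurd h (by simp [pow_ne_zero])
      · exact h
    rwa [Polynomial.IsRoot, ← Polynomial.coeff_zero_eq_eval_zero]
  have := hdil 0 hroot
  norm_num at this

lemma rep_unique {n : ℕ} {M : Matrix (Fin n) (Fin n) ℤ} {Γstar : Finset (Fin n → ℝ)}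
    (hΓ : FreqReps M Γstar) {γ₁ γ₂ : Fin n → ℝ} (h₁ : γ₁ ∈ Γstar) (h₂ : γ₂ ∈ Γstar)
    (h : ∃ l : Fin n → ℤ, ∀ i, γ₁ i = γ₂ i + 2 * Real.pi * (l i : ℝ)) : γ₁ = γ₂ := by
  obtain ⟨m₁, hm₁⟩ := hΓ.2.1 γ₁ h₁
  obtain ⟨l, hl⟩ := h
  refine (hΓ.2.2 m₁).unique ⟨h₁, ⟨0, ?_⟩⟩ ⟨h₂, ⟨l, ?_⟩⟩
  · intro i; rw [← hm₁ i]; simp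
  · intro i; rw [← hm₁ i]; exact hl i

lemma rep_exists {n : ℕ} {M : Matrix (Fin n) (Fin n) ℤ} {Γstar : Finset (Fin n → ℝ)}
    (hΓ : FreqReps M Γstar) {γ δ : Fin n → ℝ} (hγ : γ ∈ Γstar) (hδ : δ ∈ Γstar) :
    ∃ ρ, ρ ∈ Γstar ∧ ∃ l : Fin n → ℤ, ∀ i, γ i + δ i = ρ i + 2 * Real.pi * (l i : ℝ) := by
  obtain ⟨mγ, hmγ⟩ := hΓ.2.1 γ hγ
  obtain ⟨mδ, hmδ⟩ := hΓ.2.1 δ hδ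
  obtain ⟨ρ, ⟨hρ, l, hl⟩, -⟩ := hΓ.2.2 (mγ + mδ)
  refine ⟨ρ, hρ, l, fun i => ?_⟩
  have hcast : (fun j => (((mγ + mδ) j : ℤ) : ℝ)) =
      (fun j => ((mγ j : ℤ) : ℝ)) + (fun j => ((mδ j : ℤ) : ℝ)) := by
    ext j; push_cast [Pi.add_apply]; ring
  have := hl i
  rw [hcast, Matrix.mulVec_add, Pi.add_apply, mul_add] at this
  rw [← hmγ i, ← hmδ i] at this
  exact this

lemma freq_sum_shift {n : ℕ} {M : Matrix (Fin n) (Fin n) ℤ} {Γstar : Finset (Fin n → ℝ)}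
    (hΓ : FreqReps M Γstar) {γ : Fin n → ℝ} (hγ : γ ∈ Γstar)
    (G : (Fin n → ℝ) → ℂ)
    (hG : ∀ v (l : Fin n → ℤ), G (v + fun i => 2 * Real.pi * (l i : ℝ)) = G v)
    (ω : Fin n → ℝ) :
    ∑ δ ∈ Γstar, G (ω + γ + δ) = ∑ ρ ∈ Γstar, G (ω + ρ) := by
  have hex : ∀ δ ∈ Γstar, ∃ ρ, ρ ∈ Γstar ∧ ∃ l : Fin n → ℤ, ∀ i,
      γ i + δ i = ρ i + 2 * Real.pi * (l i : ℝ) := fun δ hδ => rep_exists hΓ hγ hδ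
  have hmem : ∀ (δ : Fin n → ℝ) (hδ : δ ∈ Γstar), (hex δ hδ).choose ∈ Γstar :=
    fun δ hδ => (hex δ hδ).choose_spec.1
  have hspec : ∀ (δ : Fin n → ℝ) (hδ : δ ∈ Γstar), ∃ l : Fin n → ℤ, ∀ i,
      γ i + δ i = (hex δ hδ).choose i + 2 * Real.pi * (l i : ℝ) :=
    fun δ hδ => (hex δ hδ).choose_spec.2
  have hinj : ∀ (δ₁ : Fin n → ℝ) (h₁ : δ₁ ∈ Γstar) (δ₂ : Fin n → ℝ) (h₂ : δ₂ ∈ Γstar),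
      (hex δ₁ h₁).choose = (hex δ₂ h₂).choose → δ₁ = δ₂ := by
    intro δ₁ h₁ δ₂ h₂ heq
    obtain ⟨l₁, hl₁⟩ := hspec δ₁ h₁
    obtain ⟨l₂, hl₂⟩ := hspec δ₂ h₂
    refine rep_unique hΓ h₁ h₂ ⟨l₁ - l₂, fun i => ?_⟩
    have e1 := hl₁ i
    have e2 := hl₂ i
    rw [heq] at e1
    push_cast [Pi.sub_apply]
    linarith
  refine Finset.sum_bij (fun δ hδ => (hex δ hδ).choose) hmem hinj ?_ ?_
  · intro ρ hρ
    obtain ⟨δ, hδ, hδρ⟩ := Finset.surj_on_of_inj_on_of_card_le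
      (fun δ hδ => (hex δ hδ).choose) hmem (fun a₁ a₂ h₁ h₂ => hinj a₁ h₁ a₂ h₂) le_rfl ρ hρ
    exact ⟨δ, hδ, hδρ.symm⟩
  · intro δ hδ
    obtain ⟨l, hl⟩ := hspec δ hδ
    have harg : ω + γ + δ = (ω + (hex δ hδ).choose) + fun i => 2 * Real.pi * (l i : ℝ) := by
      ext i
      simp only [Pi.add_apply]
      have := hl i
      linarith
    rw [harg, hG]

lemma MT_add {n : ℕ} (M : Matrix (Fin n) (Fin n) ℤ) (v w : Fin n → ℝ) :
    MT M (v + w) = MT M v + MT M w := Matrix.mulVec_add _ _ _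

lemma MT_gamma {n : ℕ} {M : Matrix (Fin n) (Fin n) ℤ} (hdil : IsDilation M)
    {Γstar : Finset (Fin n → ℝ)} (hΓ : FreqReps M Γstar) {γ : Fin n → ℝ} (hγ : γ ∈ Γstar) :
    ∃ m : Fin n → ℤ, MT M γ = fun i => 2 * Real.pi * (m i : ℝ) := by
  obtain ⟨m, hm⟩ := hΓ.2.1 γ hγ
  refine ⟨m, ?_⟩
  set B := M.map (Int.cast : ℤ → ℝ) with hB
  have hγeq : γ = (2 * Real.pi) • (B⁻¹.transpose.mulVec fun j => (m j : ℝ)) := by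
    ext i; rw [hm i]; simp [smul_eq_mul]
  rw [show MT M γ = B.transpose.mulVec γ from rfl, hγeq, Matrix.mulVec_smul,
    Matrix.mulVec_mulVec, ← Matrix.transpose_mul, Matrix.nonsing_inv_mul B (dil_det_ne hdil),
    Matrix.transpose_one, Matrix.one_mulVec]
  ext i; simp [smul_eq_mul]

open Finset in
lemma pointwise_key {n : ℕ} {M : Matrix (Fin n) (Fin n) ℤ} (hdil : IsDilation M)
    {Γstar : Finset (Fin n → ℝ)} (hΓ : FreqReps M Γstar)
    {Sp Sq : (Fin n → ℝ) → ℝ} (hSp : IsTrigPolyR Sp) (hSq : IsTrigPolyR Sq)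
    (hSnn : ∀ ω, Sq ω ≠ 0 → 0 ≤ Sp ω / Sq ω)
    {τ : (Fin n → ℝ) → ℂ} (hτ : IsTrigPoly τ)
    {r : ℕ} {qn qd : Fin r → (Fin n → ℝ) → ℂ}
    (hqn : ∀ ℓ, IsTrigPoly (qn ℓ)) (hqd : ∀ ℓ, IsTrigPoly (qd ℓ))
    (hOEP : ∀ γ ∈ Γstar, ∀ ω : Fin n → ℝ,
      Sq (MT M ω) ≠ 0 → Sq ω ≠ 0 →
      (∀ ℓ, qd ℓ ω ≠ 0 ∧ qd ℓ (ω + γ) ≠ 0) →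
      (γ = 0 →
        ((Sp (MT M ω) / Sq (MT M ω) : ℝ) : ℂ) * τ ω * (starRingEnd ℂ) (τ (ω + γ))
            + ∑ ℓ, (qn ℓ ω / qd ℓ ω) * (starRingEnd ℂ) (qn ℓ (ω + γ) / qd ℓ (ω + γ))
          = ((Sp ω / Sq ω : ℝ) : ℂ)) ∧
      (γ ≠ 0 →
        ((Sp (MT M ω) / Sq (MT M ω) : ℝ) : ℂ) * τ ω * (starRingEnd ℂ) (τ (ω + γ))
            + ∑ ℓ, (qn ℓ ω / qd ℓ ω) * (starRingEnd ℂ) (qn ℓ (ω + γ) / qd ℓ (ω + γ))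
          = 0))
    (ω : Fin n → ℝ)
    (hA1 : Sq (MT M ω) ≠ 0) (hA2 : Sp (MT M ω) ≠ 0)
    (hS : ∀ γ ∈ Γstar, Sq (ω + γ) ≠ 0 ∧ Sp (ω + γ) ≠ 0)
    (hqz : ∀ ℓ, ∀ γ ∈ Γstar, ∀ δ ∈ Γstar, qd ℓ (ω + γ + δ) ≠ 0) :
    ∑ γ ∈ Γstar, ‖τ (ω + γ)‖ ^ 2 / (Sp (ω + γ) / Sq (ω + γ))
      ≤ Sq (MT M ω) / Sp (MT M ω) := by
  classical
  set A : ℝ := Sp (MT M ω) / Sq (MT M ω) with hAdef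
  set t : ℝ := ∑ γ ∈ Γstar, ‖τ (ω + γ)‖ ^ 2 / (Sp (ω + γ) / Sq (ω + γ)) with htdef
  set x : (Fin n → ℝ) → ℂ :=
    fun v => (starRingEnd ℂ) (τ v) / ((Sp v / Sq v : ℝ) : ℂ) with hxdef
  -- periodicity of the various functions
  have hxper : ∀ (v : Fin n → ℝ) (l : Fin n → ℤ),
      x (v + fun i => 2 * Real.pi * (l i : ℝ)) = x v := by
    intro v l
    simp only [hxdef, trig_periodic hτ, trigR_periodic hSp, trigR_periodic hSq]
  -- S > 0 at the relevant points
  have hSpos : ∀ γ ∈ Γstar, 0 < Sp (ω + γ) / Sq (ω + γ) := by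
    intro γ hγ
    exact lt_of_le_of_ne (hSnn _ (hS γ hγ).1) (div_ne_zero (hS γ hγ).2 (hS γ hγ).1).symm
  have hApos : 0 < A := lt_of_le_of_ne (hSnn _ hA1) (div_ne_zero hA2 hA1).symm
  -- the OEP identity recentred at ω + γ
  have hOEP' : ∀ γ ∈ Γstar, ∀ δ ∈ Γstar,
      ((A : ℝ) : ℂ) * τ (ω + γ) * (starRingEnd ℂ) (τ (ω + γ + δ))
          + ∑ ℓ, (qn ℓ (ω + γ) / qd ℓ (ω + γ))
              * (starRingEnd ℂ) (qn ℓ (ω + γ + δ) / qd ℓ (ω + γ + δ))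
        = if δ = 0 then ((Sp (ω + γ) / Sq (ω + γ) : ℝ) : ℂ) else 0 := by
    intro γ hγ δ hδ
    obtain ⟨m, hm⟩ := MT_gamma hdil hΓ hγ
    have hMT : MT M (ω + γ) = MT M ω + fun i => 2 * Real.pi * (m i : ℝ) := by
      rw [MT_add, hm]
    have hbase1 : Sq (MT M (ω + γ)) ≠ 0 := by
      rw [hMT, trigR_periodic hSq]; exact hA1
    have hAper : Sp (MT M (ω + γ)) / Sq (MT M (ω + γ)) = A := by
      rw [hMT, trigR_periodic hSq, trigR_periodic hSp]
    have hqdc : ∀ ℓ, qd ℓ (ω + γ) ≠ 0 ∧ qd ℓ (ω + γ + δ) ≠ 0 := by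
      intro ℓ
      constructor
      · have := hqz ℓ γ hγ 0 hΓ.1
        rwa [add_zero] at this
      · exact hqz ℓ γ hγ δ hδ
    have h := hOEP δ hδ (ω + γ) hbase1 (hS γ hγ).1 hqdc
    by_cases h0 : δ = 0
    · rw [if_pos h0]
      have := h.1 h0
      rwa [hAper] at this
    · rw [if_neg h0]
      have := h.2 h0
      rwa [hAper] at this
  -- the sum of squares
  set P : ℂ := ∑ ℓ, (∑ γ ∈ Γstar, x (ω + γ) * (qn ℓ (ω + γ) / qd ℓ (ω + γ)))
      * (starRingEnd ℂ) (∑ γ ∈ Γstar, x (ω + γ) * (qn ℓ (ω + γ) / qd ℓ (ω + γ))) with hPdef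
  -- P is a sum of |·|², hence has nonnegative real part
  have hPre : 0 ≤ P.re := by
    rw [hPdef, Complex.re_sum]
    apply Finset.sum_nonneg
    intro ℓ _
    rw [Complex.mul_conj]
    simp [Complex.normSq_nonneg]
  -- expansion of P
  have hexp : P = ∑ γ ∈ Γstar, x (ω + γ) * (∑ ρ ∈ Γstar, (starRingEnd ℂ) (x (ω + ρ))
      * (∑ ℓ, (qn ℓ (ω + γ) / qd ℓ (ω + γ))
          * (starRingEnd ℂ) (qn ℓ (ω + ρ) / qd ℓ (ω + ρ)))) := by
    rw [hPdef]
    have step1 : ∀ ℓ : Fin r,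
        (∑ γ ∈ Γstar, x (ω + γ) * (qn ℓ (ω + γ) / qd ℓ (ω + γ)))
            * (starRingEnd ℂ) (∑ ρ ∈ Γstar, x (ω + ρ) * (qn ℓ (ω + ρ) / qd ℓ (ω + ρ)))
          = ∑ γ ∈ Γstar, ∑ ρ ∈ Γstar,
              x (ω + γ) * ((starRingEnd ℂ) (x (ω + ρ))
                * ((qn ℓ (ω + γ) / qd ℓ (ω + γ))
                    * (starRingEnd ℂ) (qn ℓ (ω + ρ) / qd ℓ (ω + ρ)))) := by
      intro ℓ
      rw [map_sum, Finset.sum_mul_sum]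
      apply Finset.sum_congr rfl; intro γ _
      apply Finset.sum_congr rfl; intro ρ _
      rw [map_mul]; ring
    calc ∑ ℓ, (∑ γ ∈ Γstar, x (ω + γ) * (qn ℓ (ω + γ) / qd ℓ (ω + γ)))
          * (starRingEnd ℂ) (∑ γ ∈ Γstar, x (ω + γ) * (qn ℓ (ω + γ) / qd ℓ (ω + γ)))
        = ∑ ℓ, ∑ γ ∈ Γstar, ∑ ρ ∈ Γstar,
            x (ω + γ) * ((starRingEnd ℂ) (x (ω + ρ))
              * ((qn ℓ (ω + γ) / qd ℓ (ω + γ))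
                  * (starRingEnd ℂ) (qn ℓ (ω + ρ) / qd ℓ (ω + ρ)))) := by
          exact Finset.sum_congr rfl fun ℓ _ => step1 ℓ
      _ = ∑ γ ∈ Γstar, ∑ ρ ∈ Γstar, ∑ ℓ, x (ω + γ) * ((starRingEnd ℂ) (x (ω + ρ))
              * ((qn ℓ (ω + γ) / qd ℓ (ω + γ))
                  * (starRingEnd ℂ) (qn ℓ (ω + ρ) / qd ℓ (ω + ρ)))) := by
          rw [Finset.sum_comm]
          exact Finset.sum_congr rfl fun γ _ => Finset.sum_comm
      _ = ∑ γ ∈ Γstar, x (ω + γ) * (∑ ρ ∈ Γstar, (starRingEnd ℂ) (x (ω + ρ))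
              * (∑ ℓ, (qn ℓ (ω + γ) / qd ℓ (ω + γ))
                  * (starRingEnd ℂ) (qn ℓ (ω + ρ) / qd ℓ (ω + ρ)))) := by
          apply Finset.sum_congr rfl; intro γ _
          rw [Finset.mul_sum]
          apply Finset.sum_congr rfl; intro ρ _
          rw [Finset.mul_sum, Finset.mul_sum]
  -- conj x * conj τ is |τ|²/S
  have hxτc : ∀ v : Fin n → ℝ, (starRingEnd ℂ) (x v) * (starRingEnd ℂ) (τ v)
      = ((‖τ v‖ ^ 2 / (Sp v / Sq v) : ℝ) : ℂ) := by
    intro v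
    simp only [hxdef, map_div₀, Complex.conj_conj, Complex.conj_ofReal]
    rw [div_mul_eq_mul_div, Complex.mul_conj, ← Complex.ofReal_div, Complex.sq_norm]
  have hxτ2 : ∀ v : Fin n → ℝ, x v * τ v
      = ((‖τ v‖ ^ 2 / (Sp v / Sq v) : ℝ) : ℂ) := by
    intro v
    simp only [hxdef]
    rw [div_mul_eq_mul_div, mul_comm ((starRingEnd ℂ) (τ v)) (τ v), Complex.mul_conj,
      ← Complex.ofReal_div, Complex.sq_norm]
  -- the τ-x cross sum equals t
  have hcross : ∀ γ ∈ Γstar,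
      ∑ δ ∈ Γstar, (starRingEnd ℂ) (x (ω + γ + δ)) * (starRingEnd ℂ) (τ (ω + γ + δ))
        = ((t : ℝ) : ℂ) := by
    intro γ hγ
    have hper : ∀ (v : Fin n → ℝ) (l : Fin n → ℤ),
        (fun v => (starRingEnd ℂ) (x v) * (starRingEnd ℂ) (τ v))
            (v + fun i => 2 * Real.pi * (l i : ℝ))
          = (fun v => (starRingEnd ℂ) (x v) * (starRingEnd ℂ) (τ v)) v := by
      intro v l
      simp only [hxper, trig_periodic hτ]
    have hre := freq_sum_shift hΓ hγ
      (fun v => (starRingEnd ℂ) (x v) * (starRingEnd ℂ) (τ v)) hper ω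
    beta_reduce at hre
    rw [hre, htdef, Complex.ofReal_sum]
    exact Finset.sum_congr rfl fun ρ _ => hxτc (ω + ρ)
  -- the inner sum over ρ
  have hinner : ∀ γ ∈ Γstar,
      ∑ ρ ∈ Γstar, (starRingEnd ℂ) (x (ω + ρ))
          * (∑ ℓ, (qn ℓ (ω + γ) / qd ℓ (ω + γ))
              * (starRingEnd ℂ) (qn ℓ (ω + ρ) / qd ℓ (ω + ρ)))
        = (starRingEnd ℂ) (x (ω + γ)) * ((Sp (ω + γ) / Sq (ω + γ) : ℝ) : ℂ)
            - ((A : ℝ) : ℂ) * τ (ω + γ) * ((t : ℝ) : ℂ) := by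
    intro γ hγ
    have hGper : ∀ (v : Fin n → ℝ) (l : Fin n → ℤ),
        (fun v => (starRingEnd ℂ) (x v) * (∑ ℓ, (qn ℓ (ω + γ) / qd ℓ (ω + γ))
            * (starRingEnd ℂ) (qn ℓ v / qd ℓ v))) (v + fun i => 2 * Real.pi * (l i : ℝ))
          = (fun v => (starRingEnd ℂ) (x v) * (∑ ℓ, (qn ℓ (ω + γ) / qd ℓ (ω + γ))
              * (starRingEnd ℂ) (qn ℓ v / qd ℓ v))) v := by
      intro v l
      have h2 : ∀ ℓ : Fin r, qn ℓ (v + fun i => 2 * Real.pi * (l i : ℝ)) = qn ℓ v :=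
        fun ℓ => trig_periodic (hqn ℓ) v l
      have h3 : ∀ ℓ : Fin r, qd ℓ (v + fun i => 2 * Real.pi * (l i : ℝ)) = qd ℓ v :=
        fun ℓ => trig_periodic (hqd ℓ) v l
      simp only [hxper, h2, h3]
    have hre := freq_sum_shift hΓ hγ
      (fun v => (starRingEnd ℂ) (x v) * (∑ ℓ, (qn ℓ (ω + γ) / qd ℓ (ω + γ))
          * (starRingEnd ℂ) (qn ℓ v / qd ℓ v))) hGper ω
    beta_reduce at hre
    rw [← hre]
    have hOEPγ : ∀ δ ∈ Γstar,
        (∑ ℓ, (qn ℓ (ω + γ) / qd ℓ (ω + γ))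
            * (starRingEnd ℂ) (qn ℓ (ω + γ + δ) / qd ℓ (ω + γ + δ)))
          = (if δ = 0 then ((Sp (ω + γ) / Sq (ω + γ) : ℝ) : ℂ) else 0)
              - ((A : ℝ) : ℂ) * τ (ω + γ) * (starRingEnd ℂ) (τ (ω + γ + δ)) := by
      intro δ hδ
      have := hOEP' γ hγ δ hδ
      linear_combination this
    calc ∑ δ ∈ Γstar, (starRingEnd ℂ) (x (ω + γ + δ))
            * (∑ ℓ, (qn ℓ (ω + γ) / qd ℓ (ω + γ))
                * (starRingEnd ℂ) (qn ℓ (ω + γ + δ) / qd ℓ (ω + γ + δ)))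
        = ∑ δ ∈ Γstar, ((if δ = 0 then (starRingEnd ℂ) (x (ω + γ + δ))
              * ((Sp (ω + γ) / Sq (ω + γ) : ℝ) : ℂ) else 0)
            - ((A : ℝ) : ℂ) * τ (ω + γ)
                * ((starRingEnd ℂ) (x (ω + γ + δ)) * (starRingEnd ℂ) (τ (ω + γ + δ)))) := by
          apply Finset.sum_congr rfl; intro δ hδ
          rw [hOEPγ δ hδ, mul_sub]
          congr 1
          · by_cases h : δ = 0 <;> simp [h]
          · ring
      _ = (starRingEnd ℂ) (x (ω + γ)) * ((Sp (ω + γ) / Sq (ω + γ) : ℝ) : ℂ)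
            - ((A : ℝ) : ℂ) * τ (ω + γ) * ((t : ℝ) : ℂ) := by
          rw [Finset.sum_sub_distrib, ← Finset.mul_sum, hcross γ hγ,
            Finset.sum_ite_eq' Γstar (0 : Fin n → ℝ)
              (fun δ => (starRingEnd ℂ) (x (ω + γ + δ))
                * ((Sp (ω + γ) / Sq (ω + γ) : ℝ) : ℂ)),
            if_pos hΓ.1, add_zero]
  -- P equals t - A t²
  have hfinal : P = ((t - A * t * t : ℝ) : ℂ) := by
    rw [hexp]
    have hterm : ∀ γ ∈ Γstar,
        x (ω + γ) * (∑ ρ ∈ Γstar, (starRingEnd ℂ) (x (ω + ρ))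
            * (∑ ℓ, (qn ℓ (ω + γ) / qd ℓ (ω + γ))
                * (starRingEnd ℂ) (qn ℓ (ω + ρ) / qd ℓ (ω + ρ))))
          = ((‖τ (ω + γ)‖ ^ 2 / (Sp (ω + γ) / Sq (ω + γ)) : ℝ) : ℂ)
              - (((A : ℝ) : ℂ) * ((t : ℝ) : ℂ))
                  * ((‖τ (ω + γ)‖ ^ 2 / (Sp (ω + γ) / Sq (ω + γ)) : ℝ) : ℂ) := by
      intro γ hγ
      rw [hinner γ hγ, mul_sub]
      congr 1
      · -- x * (conj x * S) = |τ|²/S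
        have hSne : ((Sp (ω + γ) / Sq (ω + γ) : ℝ) : ℂ) ≠ 0 :=
          Complex.ofReal_ne_zero.mpr (ne_of_gt (hSpos γ hγ))
        calc x (ω + γ) * ((starRingEnd ℂ) (x (ω + γ)) * ((Sp (ω + γ) / Sq (ω + γ) : ℝ) : ℂ))
            = x (ω + γ) * ((τ (ω + γ) / ((Sp (ω + γ) / Sq (ω + γ) : ℝ) : ℂ))
                * ((Sp (ω + γ) / Sq (ω + γ) : ℝ) : ℂ)) := by
              simp only [hxdef, map_div₀, Complex.conj_conj, Complex.conj_ofReal]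
          _ = x (ω + γ) * τ (ω + γ) := by rw [div_mul_cancel₀ _ hSne]
          _ = _ := hxτ2 (ω + γ)
      · rw [← hxτ2 (ω + γ)]; ring
    calc ∑ γ ∈ Γstar, x (ω + γ) * (∑ ρ ∈ Γstar, (starRingEnd ℂ) (x (ω + ρ))
            * (∑ ℓ, (qn ℓ (ω + γ) / qd ℓ (ω + γ))
                * (starRingEnd ℂ) (qn ℓ (ω + ρ) / qd ℓ (ω + ρ))))
        = ∑ γ ∈ Γstar, (((‖τ (ω + γ)‖ ^ 2 / (Sp (ω + γ) / Sq (ω + γ)) : ℝ) : ℂ)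
            - (((A : ℝ) : ℂ) * ((t : ℝ) : ℂ))
                * ((‖τ (ω + γ)‖ ^ 2 / (Sp (ω + γ) / Sq (ω + γ)) : ℝ) : ℂ)) :=
          Finset.sum_congr rfl hterm
      _ = ((t : ℝ) : ℂ) - (((A : ℝ) : ℂ) * ((t : ℝ) : ℂ)) * ((t : ℝ) : ℂ) := by
          rw [Finset.sum_sub_distrib, ← Finset.mul_sum, ← Complex.ofReal_sum, ← htdef]
      _ = ((t - A * t * t : ℝ) : ℂ) := by push_cast; ring
  -- nonnegativity
  have hkey : 0 ≤ t - A * t * t := by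
    have : P.re = t - A * t * t := by rw [hfinal, Complex.ofReal_re]
    linarith [hPre, this.symm.le, this.le]
  have ht0 : 0 ≤ t :=
    Finset.sum_nonneg fun γ hγ => div_nonneg (sq_nonneg _) (hSpos γ hγ).le
  have hgoal : Sq (MT M ω) / Sp (MT M ω) = A⁻¹ := by rw [hAdef, inv_div]
  rw [hgoal]
  by_contra hcon
  push_neg at hcon
  have hinvpos : 0 < A⁻¹ := inv_pos.mpr hApos
  have ht0' : 0 < t := lt_trans hinvpos hcon
  have h1 : 1 < A * t := by
    have := (mul_lt_mul_iff_right₀ hApos).mpr hcon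
    rwa [mul_inv_cancel₀ (ne_of_gt hApos)] at this
  have h2 : t < A * t * t := by
    have := (mul_lt_mul_iff_left₀ ht0').mpr h1
    rwa [one_mul] at this
  linarith

/-- **OEP conditions imply the oblique sub-QMF condition.** If rational
trigonometric polynomial highpass masks `q_ℓ` satisfy the OEP conditions with the
trigonometric polynomial lowpass mask `τ` and the nonzero nonnegative rational
trigonometric polynomial vmr function `S = Sp/Sq`, then
`Σ_{γ∈Γ*} |τ(ω+γ)|²/S(ω+γ) ≤ 1/S(Mᵀω)` wherever both sides are defined. -/
theorem oep_implies_oblique_subQMF (n : ℕ) (M : Matrix (Fin n) (Fin n) ℤ)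
    (hdil : IsDilation M)
    (Γstar : Finset (Fin n → ℝ)) (hΓstar : FreqReps M Γstar)
    (Sp Sq : (Fin n → ℝ) → ℝ) (hSp : IsTrigPolyR Sp) (hSq : IsTrigPolyR Sq)
    (hq0 : ∃ ω, Sq ω ≠ 0) (hSnz : ∃ ω, Sq ω ≠ 0 ∧ Sp ω ≠ 0)
    (hSnn : ∀ ω, Sq ω ≠ 0 → 0 ≤ Sp ω / Sq ω)
    (τ : (Fin n → ℝ) → ℂ) (hτ : IsTrigPoly τ) (hτ0 : τ 0 = 1)
    (r : ℕ) (qn qd : Fin r → (Fin n → ℝ) → ℂ)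
    (hqn : ∀ ℓ, IsTrigPoly (qn ℓ)) (hqd : ∀ ℓ, IsTrigPoly (qd ℓ))
    (hqd0 : ∀ ℓ, ∃ ω, qd ℓ ω ≠ 0)
    (hOEP : ∀ γ ∈ Γstar, ∀ ω : Fin n → ℝ,
      Sq (MT M ω) ≠ 0 → Sq ω ≠ 0 →
      (∀ ℓ, qd ℓ ω ≠ 0 ∧ qd ℓ (ω + γ) ≠ 0) →
      (γ = 0 →
        ((Sp (MT M ω) / Sq (MT M ω) : ℝ) : ℂ) * τ ω * (starRingEnd ℂ) (τ (ω + γ))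
            + ∑ ℓ, (qn ℓ ω / qd ℓ ω) * (starRingEnd ℂ) (qn ℓ (ω + γ) / qd ℓ (ω + γ))
          = ((Sp ω / Sq ω : ℝ) : ℂ)) ∧
      (γ ≠ 0 →
        ((Sp (MT M ω) / Sq (MT M ω) : ℝ) : ℂ) * τ ω * (starRingEnd ℂ) (τ (ω + γ))
            + ∑ ℓ, (qn ℓ ω / qd ℓ ω) * (starRingEnd ℂ) (qn ℓ (ω + γ) / qd ℓ (ω + γ))
          = 0)) :
    ∀ ω : Fin n → ℝ, Sq (MT M ω) ≠ 0 → Sp (MT M ω) ≠ 0 →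
      (∀ γ ∈ Γstar, Sq (ω + γ) ≠ 0 ∧ Sp (ω + γ) ≠ 0) →
      ∑ γ ∈ Γstar, ‖τ (ω + γ)‖ ^ 2 / (Sp (ω + γ) / Sq (ω + γ))
        ≤ Sq (MT M ω) / Sp (MT M ω) := by
  classical
  intro ω hA1 hA2 hS
  -- the dense set where all the qd denominators are nonzero
  set D : Set (Fin n → ℝ) :=
    ⋂ p : Fin r × {y // y ∈ Γstar} × {y // y ∈ Γstar},
      {ω' : Fin n → ℝ | qd p.1 (ω' + (p.2.1.1 + p.2.2.1)) ≠ 0} with hDdef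
  have hDdense : Dense D :=
    dense_iInter_of_isOpen
      (fun p => trig_open_ne (hqd p.1) _)
      (fun p => trig_dense_ne (hqd p.1) (hqd0 p.1) _)
  have hDmem : ∀ ω' ∈ D, ∀ ℓ, ∀ γ ∈ Γstar, ∀ δ ∈ Γstar, qd ℓ (ω' + γ + δ) ≠ 0 := by
    intro ω' hω' ℓ γ hγ δ hδ
    have := Set.mem_iInter.mp hω' ⟨ℓ, ⟨γ, hγ⟩, ⟨δ, hδ⟩⟩
    simp only [Set.mem_setOf_eq] at this
    rwa [← add_assoc] at this
  -- continuity facts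
  have hMTcont : Continuous (MT M) := by
    have : MT M = ⇑((M.map (Int.cast : ℤ → ℝ)).transpose.mulVecLin) := rfl
    rw [this]
    exact LinearMap.continuous_of_finiteDimensional _
  have hSqc : Continuous Sq := trigR_continuous hSq
  have hSpc : Continuous Sp := trigR_continuous hSp
  have hτc : Continuous τ := trig_continuous hτ
  have haddc : ∀ c : Fin n → ℝ, Continuous (fun ω' : Fin n → ℝ => ω' + c) :=
    fun c => continuous_id.add continuous_const
  -- the open set of valid points
  set U : Set (Fin n → ℝ) := {ω' | Sq (MT M ω') ≠ 0 ∧ Sp (MT M ω') ≠ 0 ∧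
      ∀ γ ∈ Γstar, Sq (ω' + γ) ≠ 0 ∧ Sp (ω' + γ) ≠ 0} with hUdef
  have hUopen : IsOpen U := by
    have hUeq : U = ({ω' : Fin n → ℝ | Sq (MT M ω') ≠ 0} ∩ {ω' | Sp (MT M ω') ≠ 0}) ∩
        ⋂ γ : {y // y ∈ Γstar},
          ({ω' : Fin n → ℝ | Sq (ω' + γ.1) ≠ 0} ∩ {ω' | Sp (ω' + γ.1) ≠ 0}) := by
      ext ω'
      simp only [hUdef, Set.mem_setOf_eq, Set.mem_inter_iff, Set.mem_iInter, Subtype.forall]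
      tauto
    rw [hUeq]
    refine ((isOpen_ne.preimage (hSqc.comp hMTcont)).inter
      (isOpen_ne.preimage (hSpc.comp hMTcont))).inter
      (isOpen_iInter_of_finite fun γ => IsOpen.inter ?_ ?_)
    · exact isOpen_ne.preimage (hSqc.comp (haddc γ.1))
    · exact isOpen_ne.preimage (hSpc.comp (haddc γ.1))
  have hωU : ω ∈ U := ⟨hA1, hA2, hS⟩
  -- limits
  haveI hNB : (nhdsWithin ω (U ∩ D)).NeBot :=
    mem_closure_iff_nhdsWithin_neBot.mp
      (hDdense.open_subset_closure_inter hUopen hωU)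
  have hFc : Filter.Tendsto
      (fun ω' => ∑ γ ∈ Γstar, ‖τ (ω' + γ)‖ ^ 2 / (Sp (ω' + γ) / Sq (ω' + γ)))
      (nhdsWithin ω (U ∩ D))
      (nhds (∑ γ ∈ Γstar, ‖τ (ω + γ)‖ ^ 2 / (Sp (ω + γ) / Sq (ω + γ)))) := by
    apply Filter.Tendsto.mono_left _ nhdsWithin_le_nhds
    apply tendsto_finset_sum
    intro γ hγ
    apply Filter.Tendsto.div
    · exact ((continuous_norm.comp (hτc.comp (haddc γ))).pow 2).continuousAt
    · exact (((hSpc.comp (haddc γ)).continuousAt (x := ω)).div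
        ((hSqc.comp (haddc γ)).continuousAt) (hS γ hγ).1 : ContinuousAt _ ω)
    · exact div_ne_zero (hS γ hγ).2 (hS γ hγ).1
  have hRc : Filter.Tendsto (fun ω' => Sq (MT M ω') / Sp (MT M ω'))
      (nhdsWithin ω (U ∩ D)) (nhds (Sq (MT M ω) / Sp (MT M ω))) := by
    apply Filter.Tendsto.mono_left _ nhdsWithin_le_nhds
    exact (((hSqc.comp hMTcont).continuousAt (x := ω)).div
      ((hSpc.comp hMTcont).continuousAt) hA2 : ContinuousAt _ ω)
  refine le_of_tendsto_of_tendsto hFc hRc (eventually_nhdsWithin_of_forall ?_)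
  rintro ω' ⟨hωU', hωD'⟩
  exact pointwise_key hdil hΓstar hSp hSq hSnn hτ hqn hqd hOEP ω'
    hωU'.1 hωU'.2.1 hωU'.2.2 (hDmem ω' hωD')
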